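/- Substituting the Nash equilibrium strategies x̄_k = s_k + γ, with γ = (n+1)⁻¹(φ⁻¹(a − δ) − l_N − l_Q), into the per-slot CES revenue −a Σ_k x̄_k − p̄ l_Q (where p̄ is the corresponding equilibrium grid price) yields exactly λ₁ a² + λ₂ a + λ₃ l_Q² + λ₄ l_Q, where λ₁ = −n((n+1)φ)⁻¹, λ₂ = n(n+1)⁻¹(l_N + φ⁻¹δ) − Σ_k s_k, λ₃ = −φ(n+1)⁻¹, and λ₄ = −(n+1)⁻¹(φ l_N + δ); in particular all cross terms in a·l_Q cancel. -/

import Mathlib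

open Finset

theorem ces_revenue_at_equilibrium (n : ℕ) (hn : 1 ≤ n) (s : Fin n → ℝ)
    (lN lQ φ δ a : ℝ) (hφ : 0 < φ) (hδ : 0 < δ) :
    -a * (∑ k : Fin n, (s k + ((n : ℝ) + 1)⁻¹ * (φ⁻¹ * (a - δ) - lN - lQ)))
      - (φ * ((n : ℝ) * (((n : ℝ) + 1)⁻¹ * (φ⁻¹ * (a - δ) - lN - lQ)) + lN + lQ) + δ) * lQ
    = (-(n : ℝ) * (((n : ℝ) + 1) * φ)⁻¹) * a ^ 2
      + ((n : ℝ) * ((n : ℝ) + 1)⁻¹ * (lN + φ⁻¹ * δ) - ∑ k : Fin n, s k) * a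
      + (-φ * ((n : ℝ) + 1)⁻¹) * lQ ^ 2
      + (-((n : ℝ) + 1)⁻¹ * (φ * lN + δ)) * lQ := by
  have hn1 : ((n : ℝ) + 1) ≠ 0 := by positivity
  rw [Finset.sum_add_distrib, Finset.sum_const, card_univ, Fintype.card_fin]
  push_cast
  have hφ0 : φ ≠ 0 := hφ.ne'
  field_simp
  ring_nf
  field_simp
  ring
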